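/- For any graph G, the first Zagreb coindex satisfies M̅₁(G) = 2m(n−1) − M₁(G), where n is the number of vertices and m the number of edges of G. -/

import Mathlib

open Finset

open scoped Classical

variable {V : Type*}

/-- Degree of a vertex, as a real number. -/
noncomputable def deg [Fintype V] (G : SimpleGraph V) (v : V) : ℝ := G.degree v

/-- The Sombor index: sum over edges of √(d(u)²+d(v)²)
(each edge counted once, via ordered pairs halved). -/
noncomputable def SO [Fintype V] (G : SimpleGraph V) : ℝ :=
  (1/2) * ∑ u : V, ∑ v : V,
    if G.Adj u v then Real.sqrt (deg G u ^ 2 + deg G v ^ 2) else 0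

/-- The Sombor coindex: sum over unordered pairs of distinct non-adjacent
vertices of √(d(u)²+d(v)²), degrees taken in `G`. -/
noncomputable def SOc [Fintype V] (G : SimpleGraph V) : ℝ :=
  (1/2) * ∑ u : V, ∑ v : V,
    if u ≠ v ∧ ¬ G.Adj u v then Real.sqrt (deg G u ^ 2 + deg G v ^ 2) else 0

/-- First Zagreb coindex. -/
noncomputable def M1c [Fintype V] (G : SimpleGraph V) : ℝ :=
  (1/2) * ∑ u : V, ∑ v : V,
    if u ≠ v ∧ ¬ G.Adj u v then deg G u + deg G v else 0

/-- Second Zagreb coindex. -/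
noncomputable def M2c [Fintype V] (G : SimpleGraph V) : ℝ :=
  (1/2) * ∑ u : V, ∑ v : V,
    if u ≠ v ∧ ¬ G.Adj u v then deg G u * deg G v else 0

/-- Forgotten coindex. -/
noncomputable def Fc [Fintype V] (G : SimpleGraph V) : ℝ :=
  (1/2) * ∑ u : V, ∑ v : V,
    if u ≠ v ∧ ¬ G.Adj u v then deg G u ^ 2 + deg G v ^ 2 else 0

/-- Number of edges of the complement (number of non-adjacent pairs of
distinct vertices), as a real number. -/
noncomputable def mbar [Fintype V] (G : SimpleGraph V) : ℝ :=
  (1/2) * ∑ u : V, ∑ v : V, if u ≠ v ∧ ¬ G.Adj u v then (1 : ℝ) else 0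

theorem zagrebCoindex_eq [Fintype V] (G : SimpleGraph V) :
    M1c G = 2 * G.edgeFinset.card * ((Fintype.card V : ℝ) - 1) - ∑ v : V, deg G v ^ 2 := by
  classical
  set S : ℝ := ∑ v : V, deg G v with hS
  have hdeg : ∀ u : V, (∑ v : V, if G.Adj u v then (1:ℝ) else 0) = deg G u := by
    intro u
    rw [Finset.sum_boole, deg]
    congr 1
    rw [← SimpleGraph.neighborFinset_eq_filter, SimpleGraph.degree]
  have hS2m : S = 2 * G.edgeFinset.card := by
    rw [hS]
    simp only [deg]
    rw [← Nat.cast_sum]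
    exact_mod_cast G.sum_degrees_eq_twice_card_edges
  have split : ∀ u v : V, (if u ≠ v ∧ ¬ G.Adj u v then deg G u + deg G v else 0)
      = (if u ≠ v then deg G u + deg G v else 0)
        - (if G.Adj u v then deg G u + deg G v else 0) := by
    intro u v
    by_cases h : G.Adj u v
    · simp [h, h.ne]
    · by_cases h2 : u = v <;> simp [h, h2]
  have hA : (∑ u : V, ∑ v : V, if u ≠ v then deg G u + deg G v else 0)
      = 2 * ((Fintype.card V : ℝ) - 1) * S := by
    have inner : ∀ u : V, (∑ v : V, if u ≠ v then deg G u + deg G v else 0)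
        = (Fintype.card V : ℝ) * deg G u + S - 2 * deg G u := by
      intro u
      have h1 : ∀ v : V, (if u ≠ v then deg G u + deg G v else 0)
          = (deg G u + deg G v) - (if u = v then deg G u + deg G v else 0) := by
        intro v; by_cases h : u = v <;> simp [h]
      simp_rw [h1]
      rw [Finset.sum_sub_distrib, Finset.sum_add_distrib, Finset.sum_ite_eq,
        Finset.sum_const, if_pos (Finset.mem_univ u)]
      simp [hS]
      ring
    simp_rw [inner]
    rw [Finset.sum_sub_distrib, Finset.sum_add_distrib, ← Finset.mul_sum, ← Finset.mul_sum,
      Finset.sum_const]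
    simp [← hS]
    ring
  have hB : (∑ u : V, ∑ v : V, if G.Adj u v then deg G u + deg G v else 0)
      = 2 * ∑ v : V, deg G v ^ 2 := by
    have h1 : ∀ u v : V, (if G.Adj u v then deg G u + deg G v else 0)
        = deg G u * (if G.Adj u v then (1:ℝ) else 0)
          + deg G v * (if G.Adj u v then (1:ℝ) else 0) := by
      intro u v; by_cases h : G.Adj u v <;> simp [h]
    simp_rw [h1, Finset.sum_add_distrib, ← Finset.mul_sum, hdeg]
    rw [Finset.sum_comm (f := fun u v => deg G v * (if G.Adj u v then (1:ℝ) else 0))]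
    have h2 : ∀ v : V, (∑ u : V, deg G v * (if G.Adj u v then (1:ℝ) else 0))
        = deg G v * deg G v := by
      intro v
      rw [← Finset.mul_sum]
      congr 1
      rw [← hdeg v]
      congr 1; ext u; simp [SimpleGraph.adj_comm]
    simp_rw [h2]
    ring_nf
  rw [M1c]
  simp_rw [split]
  simp_rw [Finset.sum_sub_distrib]
  rw [hA, hB, hS2m]
  ring
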